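/- Let E = ℝⁿ with the standard inner product, let C ⊆ E be a compact convex set satisfying the α-scaling inequality for some α > 0, let f : E → ℝ be convex, differentiable, and L-smooth (L > 0), and let c > 0 satisfy ‖∇f(x)‖ ≥ c for all x ∈ C. Let x* be a minimizer of f over C. Consider the Frank–Wolfe iterates defined by x₀ ∈ C and, for t ≥ 0, v_t a maximizer of z ↦ ⟨−∇f(x_t), z⟩ over C, s_t a minimizer over s ∈ [0,1] of s·⟨∇f(x_t), v_t − x_t⟩ + s²·(L/2)‖v_t − x_t‖², and x_{t+1} = x_t + s_t (v_t − x_t). Then for every t ≥ 0, f(x_{t+1}) − f(x*) ≤ max{1/2, 1 − αc/(2L)} · (f(x_t) − f(x*)); in particular f(x_t) − f(x*) ≤ (max{1/2, 1 − αc/(2L)})^t · (f(x₀) − f(x*)). -/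
import Mathlib


open RealInnerProductSpace

lemma grad_ineq_aux {n : ℕ} (f : EuclideanSpace ℝ (Fin n) → ℝ) (L : ℝ)
    (hfconv : ConvexOn ℝ Set.univ f)
    (hsmooth : ∀ x y, |f y - f x - ⟪gradient f x, y - x⟫| ≤ L / 2 * ‖y - x‖ ^ 2)
    (x y : EuclideanSpace ℝ (Fin n)) :
    ⟪gradient f x, y - x⟫ ≤ f y - f x := by
  set d : EuclideanSpace ℝ (Fin n) := y - x with hd
  set K : ℝ := |L / 2 * ‖d‖ ^ 2| with hK
  have hKnn : 0 ≤ K := abs_nonneg _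
  have hbound : ∀ t : ℝ, 0 < t → t ≤ 1 → ⟪gradient f x, d⟫ - (f y - f x) ≤ K * t := by
    intro t ht0 ht1
    have hcomb := hfconv.2 (Set.mem_univ x) (Set.mem_univ y)
      (show (0:ℝ) ≤ 1 - t by linarith) (show (0:ℝ) ≤ t from ht0.le) (by ring)
    have heq : (1 - t) • x + t • y = x + t • d := by rw [hd]; module
    rw [heq] at hcomb
    have hs := hsmooth x (x + t • d)
    have hsub : x + t • d - x = t • d := by abel
    rw [hsub] at hs
    have hinner : ⟪gradient f x, t • d⟫ = t * ⟪gradient f x, d⟫ := real_inner_smul_right _ _ _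
    have hnorm : ‖t • d‖ ^ 2 = t ^ 2 * ‖d‖ ^ 2 := by
      rw [norm_smul, mul_pow, Real.norm_eq_abs, sq_abs]
    rw [hinner, hnorm] at hs
    have h1 := (abs_le.mp hs).1
    simp only [smul_eq_mul] at hcomb
    have h2 : f (x + t • d) - f x ≤ t * (f y - f x) := by nlinarith [hcomb]
    have hKt : L / 2 * ‖d‖ ^ 2 * t ≤ K * t :=
      mul_le_mul_of_nonneg_right (le_abs_self _) (le_of_lt ht0)
    have h3 : t * (⟪gradient f x, d⟫ - (f y - f x)) ≤ K * t * t := by nlinarith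
    nlinarith [h3, ht0, ht1, mul_pos ht0 ht0]
  by_contra hcon
  push_neg at hcon
  set A : ℝ := ⟪gradient f x, d⟫ - (f y - f x) with hA
  have hApos : 0 < A := by linarith
  set t : ℝ := min 1 (A / (K + 1)) with htdef
  have ht0 : 0 < t := lt_min one_pos (by positivity)
  have ht1 : t ≤ 1 := min_le_left _ _
  have hb := hbound t ht0 ht1
  have htle : t * (K + 1) ≤ A := by
    rw [← le_div_iff₀ (by positivity)]
    exact min_le_right _ _
  nlinarith [hb, htle, ht0, mul_nonneg hKnn (le_of_lt ht0)]

lemma fw_e1_aux (I D2 L : ℝ) (hLne : L ≠ 0) (hD2ne : D2 ≠ 0) :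
    -I / (L * D2) * I + (-I / (L * D2)) ^ 2 * (L / 2) * D2 = -(I ^ 2 / (2 * (L * D2))) := by
  field_simp
  ring

/-- Linear convergence of the Frank–Wolfe algorithm on a compact convex set
satisfying the `α`-scaling inequality, for a convex, differentiable, `L`-smooth objective whose
gradient norm is bounded below by `c > 0` on the set. -/
theorem frank_wolfe_linear_convergence {n : ℕ}
    (C : Set (EuclideanSpace ℝ (Fin n))) (α L c : ℝ)
    (hC : IsCompact C) (hconv : Convex ℝ C) (hα : 0 < α) (hL : 0 < L) (hc : 0 < c)
    (hscale : ∀ x ∈ C, ∀ w : EuclideanSpace ℝ (Fin n), ∀ v ∈ C,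
        (∀ z ∈ C, ⟪w, z⟫ ≤ ⟪w, v⟫) → ⟪w, v - x⟫ ≥ α * ‖w‖ * ‖v - x‖ ^ 2)
    (f : EuclideanSpace ℝ (Fin n) → ℝ)
    (hfconv : ConvexOn ℝ Set.univ f) (hdiff : Differentiable ℝ f)
    (hsmooth : ∀ x y, |f y - f x - ⟪gradient f x, y - x⟫| ≤ L / 2 * ‖y - x‖ ^ 2)
    (hgrad : ∀ x ∈ C, c ≤ ‖gradient f x‖)
    (xstar : EuclideanSpace ℝ (Fin n)) (hxstarC : xstar ∈ C)
    (hxstar : ∀ z ∈ C, f xstar ≤ f z)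
    (x v : ℕ → EuclideanSpace ℝ (Fin n)) (s : ℕ → ℝ)
    (hx0 : x 0 ∈ C)
    (hvC : ∀ t, v t ∈ C)
    (hvmax : ∀ t, ∀ z ∈ C, ⟪-gradient f (x t), z⟫ ≤ ⟪-gradient f (x t), v t⟫)
    (hsIcc : ∀ t, s t ∈ Set.Icc (0 : ℝ) 1)
    (hsmin : ∀ t, ∀ s' ∈ Set.Icc (0 : ℝ) 1,
        s t * ⟪gradient f (x t), v t - x t⟫ + (s t) ^ 2 * (L / 2) * ‖v t - x t‖ ^ 2 ≤
          s' * ⟪gradient f (x t), v t - x t⟫ + s' ^ 2 * (L / 2) * ‖v t - x t‖ ^ 2)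
    (hstep : ∀ t, x (t + 1) = x t + s t • (v t - x t)) :
    (∀ t, f (x (t + 1)) - f xstar ≤
        max (1 / 2) (1 - α * c / (2 * L)) * (f (x t) - f xstar)) ∧
    (∀ t, f (x t) - f xstar ≤
        (max (1 / 2) (1 - α * c / (2 * L))) ^ t * (f (x 0) - f xstar)) := by
  set ρ : ℝ := max (1 / 2) (1 - α * c / (2 * L)) with hρ
  have hρhalf : (1:ℝ)/2 ≤ ρ := le_max_left _ _
  have hρ2 : 1 - α * c / (2 * L) ≤ ρ := le_max_right _ _
  have hρ0 : 0 ≤ ρ := by linarith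
  have memC : ∀ t, x t ∈ C := by
    intro t
    induction t with
    | zero => exact hx0
    | succ t ih =>
      rw [hstep t]
      have hst := hsIcc t
      have heq : x t + s t • (v t - x t) = (1 - s t) • x t + s t • v t := by module
      rw [heq]
      exact hconv ih (hvC t) (by linarith [hst.2]) hst.1 (by ring)
  have key : ∀ t, f (x (t + 1)) - f xstar ≤ ρ * (f (x t) - f xstar) := by
    intro t
    obtain ⟨I, hI⟩ : ∃ r : ℝ, ⟪gradient f (x t), v t - x t⟫ = r := ⟨_, rfl⟩
    obtain ⟨D2, hD2⟩ : ∃ r : ℝ, ‖v t - x t‖ ^ 2 = r := ⟨_, rfl⟩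
    obtain ⟨G, hG⟩ : ∃ r : ℝ, ‖gradient f (x t)‖ = r := ⟨_, rfl⟩
    have hD2nn : 0 ≤ D2 := hD2 ▸ (by positivity)
    have hht0 : 0 ≤ f (x t) - f xstar := by linarith [hxstar (x t) (memC t)]
    have e2 : I = ⟪gradient f (x t), v t⟫ - ⟪gradient f (x t), x t⟫ := by
      rw [← hI]; exact inner_sub_right _ _ _
    have hI0 : I ≤ 0 := by
      have h := hvmax t (x t) (memC t)
      simp only [inner_neg_left, neg_le_neg_iff] at h
      linarith [h, e2.le, e2.ge]
    have hhtI : f (x t) - f xstar ≤ -I := by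
      have h1 := grad_ineq_aux f L hfconv hsmooth (x t) xstar
      have h2 := hvmax t xstar hxstarC
      simp only [inner_neg_left, neg_le_neg_iff] at h2
      have e1 : ⟪gradient f (x t), xstar - x t⟫
          = ⟪gradient f (x t), xstar⟫ - ⟪gradient f (x t), x t⟫ := inner_sub_right _ _ _
      rw [e1] at h1
      linarith [h1, h2, e2.le, e2.ge]
    have hsc : α * c * D2 ≤ -I := by
      have h1 := hscale (x t) (memC t) (-(gradient f (x t))) (v t) (hvC t) (hvmax t)
      rw [inner_neg_left, norm_neg, hI, hD2, hG] at h1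
      have h2 : c ≤ G := hG ▸ hgrad (x t) (memC t)
      nlinarith [h1, h2, hD2nn, hα]
    have descent : ∀ s' ∈ Set.Icc (0:ℝ) 1,
        f (x (t + 1)) - f (x t) ≤ s' * I + s' ^ 2 * (L / 2) * D2 := by
      intro s' hs'
      have hs2 := hsmooth (x t) (x (t + 1))
      have hsub : x (t + 1) - x t = s t • (v t - x t) := by rw [hstep t]; abel
      rw [hsub, real_inner_smul_right, norm_smul, mul_pow, Real.norm_eq_abs, sq_abs,
        hI, hD2] at hs2
      have h1 := (abs_le.mp hs2).2
      have h2 := hsmin t s' hs'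
      rw [hI, hD2] at h2
      linarith [h1, h2]
    by_cases hcase : L * D2 ≤ -I
    · have hd1 := descent 1 ⟨zero_le_one, le_refl 1⟩
      nlinarith [hd1, hcase, hhtI, hht0, mul_le_mul_of_nonneg_right hρhalf hht0]
    · push_neg at hcase
      have hD2pos : 0 < D2 := by nlinarith [hcase, hI0, hL, hD2nn]
      have hLD : 0 < L * D2 := mul_pos hL hD2pos
      have hd := descent (-I / (L * D2))
        ⟨div_nonneg (by linarith) hLD.le, (div_le_one hLD).mpr (by linarith)⟩
      rw [fw_e1_aux I D2 L hL.ne' hD2pos.ne'] at hd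
      have hkey : α * c * D2 * (f (x t) - f xstar) ≤ I ^ 2 := by
        nlinarith [mul_le_mul hsc hhtI hht0 (by linarith : (0:ℝ) ≤ -I)]
      have e3 : α * c / (2 * L) * (f (x t) - f xstar) ≤ I ^ 2 / (2 * (L * D2)) := by
        rw [div_mul_eq_mul_div, div_le_div_iff₀ (by positivity) (by positivity)]
        nlinarith [hkey, hL, hD2pos]
      have h5 : f (x (t + 1)) - f xstar ≤ (1 - α * c / (2 * L)) * (f (x t) - f xstar) := by
        linarith [hd, e3]
      calc f (x (t + 1)) - f xstar ≤ (1 - α * c / (2 * L)) * (f (x t) - f xstar) := h5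
        _ ≤ ρ * (f (x t) - f xstar) := mul_le_mul_of_nonneg_right hρ2 hht0
  refine ⟨key, ?_⟩
  intro t
  induction t with
  | zero => simp
  | succ t ih =>
    calc f (x (t + 1)) - f xstar ≤ ρ * (f (x t) - f xstar) := key t
      _ ≤ ρ * (ρ ^ t * (f (x 0) - f xstar)) := mul_le_mul_of_nonneg_left ih hρ0
      _ = ρ ^ (t + 1) * (f (x 0) - f xstar) := by ring
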